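/- Fix a real number σ̃ ≥ 0. For all integers k, l ≥ 2, the sum over m from 2 to k of A_{k,m}(σ̃)·B_{m,l}(σ̃) equals −l(σ̃+l−1)·B_{k,l}(σ̃); i.e., the l-th column of the matrix B(σ̃) is an eigenvector of A(σ̃) with eigenvalue λ_l = −l(σ̃+l−1). -/

import Mathlib

open Real Finset

/-- The matrix `A(σ̃)`: `A_{k,l} = k(k−1)` if `k = l+1`, `−k(σ̃+k−1)` if `k = l`,
and `0` otherwise. -/
noncomputable def Amat (σ : ℝ) (k l : ℕ) : ℝ :=
  if k = l + 1 then (k : ℝ) * ((k : ℝ) - 1)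
  else if k = l then -(k : ℝ) * (σ + (k : ℝ) - 1)
  else 0

/-- The matrix `B(σ̃)`: `B_{k,l} = (k!/l!)·C(k−1,l−1)·Γ(σ̃+2l)/Γ(σ̃+k+l)`. -/
noncomputable def Bmat (σ : ℝ) (k l : ℕ) : ℝ :=
  ((Nat.factorial k : ℝ) / (Nat.factorial l : ℝ)) * (Nat.choose (k - 1) (l - 1) : ℝ) *
    Real.Gamma (σ + 2 * l) / Real.Gamma (σ + k + l)

lemma key_step (σ : ℝ) (hσ : 0 ≤ σ) (c b : ℕ) (hb : 1 ≤ b) (hbc : b ≤ c) :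
    ((c:ℝ)+2)*((c:ℝ)+1) * Bmat σ (c+1) (b+1)
      = (((c:ℝ)+2)-((b:ℝ)+1)) * (σ+((c:ℝ)+2)+((b:ℝ)+1)-1) * Bmat σ (c+2) (b+1) := by
  have hx : (0:ℝ) < σ + (c:ℝ) + (b:ℝ) + 2 := by positivity
  have hG1 : (0:ℝ) < Real.Gamma (σ + ((c+1 : ℕ):ℝ) + ((b+1 : ℕ):ℝ)) := by
    apply Real.Gamma_pos_of_pos; push_cast; positivity
  have hG : Real.Gamma (σ + ((c+2 : ℕ):ℝ) + ((b+1 : ℕ):ℝ))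
      = (σ + c + b + 2) * Real.Gamma (σ + ((c+1 : ℕ):ℝ) + ((b+1 : ℕ):ℝ)) := by
    push_cast
    rw [show σ + ((c:ℝ)+2) + ((b:ℝ)+1) = (σ + (c:ℝ) + (b:ℝ) + 2) + 1 by ring,
      Real.Gamma_add_one (ne_of_gt hx)]
    ring_nf
  have hcast : ((c + 1 - b : ℕ) : ℝ) = ((c:ℝ)+1) - (b:ℝ) := by
    push_cast [Nat.cast_sub (le_trans hbc (Nat.le_succ c))]; ring
  have hch : ((Nat.choose c b : ℕ) : ℝ) * ((c:ℝ)+1)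
      = ((Nat.choose (c+1) b : ℕ) : ℝ) * (((c:ℝ)+1) - (b:ℝ)) := by
    calc ((Nat.choose c b : ℕ) : ℝ) * ((c:ℝ)+1)
        = ((Nat.choose c b * (c+1) : ℕ) : ℝ) := by push_cast; ring
      _ = ((Nat.choose (c+1) b * (c+1-b) : ℕ) : ℝ) := by rw [Nat.choose_mul_succ_eq c b]
      _ = _ := by rw [Nat.cast_mul, hcast]
  unfold Bmat
  simp only [Nat.add_sub_cancel, Nat.factorial_succ, show c+2-1 = c+1 from rfl]
  rw [hG]
  have hfl : (0:ℝ) < ((Nat.factorial b : ℕ) : ℝ) := by positivity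
  set Γ1 := Real.Gamma (σ + ((c+1 : ℕ):ℝ) + ((b+1 : ℕ):ℝ)) with hΓ1
  set G := Real.Gamma (σ + 2 * ((b+1 : ℕ):ℝ)) with hGdef
  set X := ((c:ℝ)+2)*((c:ℝ)+1) * ((Nat.factorial c : ℕ):ℝ) * G /
      ((((b:ℝ)+1) * ((Nat.factorial b : ℕ):ℝ)) * Γ1) with hX
  have e1 : ((c:ℝ)+2)*((c:ℝ)+1) *
      (((((c:ℕ)+1) * Nat.factorial c : ℕ):ℝ) / ((((b:ℕ)+1) * Nat.factorial b : ℕ):ℝ)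
        * ((Nat.choose c b : ℕ):ℝ) * G / Γ1)
      = X * (((Nat.choose c b : ℕ):ℝ) * ((c:ℝ)+1)) := by
    rw [hX]
    have h1 : Γ1 ≠ 0 := ne_of_gt hG1
    field_simp
    push_cast
    ring
  have e2 : (((c:ℝ)+2)-((b:ℝ)+1)) * (σ+((c:ℝ)+2)+((b:ℝ)+1)-1) *
      (((((c:ℕ)+1+1) * (((c:ℕ)+1) * Nat.factorial c) : ℕ):ℝ) / ((((b:ℕ)+1) * Nat.factorial b : ℕ):ℝ)
        * ((Nat.choose (c+1) b : ℕ):ℝ) * G / ((σ + (c:ℝ) + (b:ℝ) + 2) * Γ1))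
      = X * (((Nat.choose (c+1) b : ℕ):ℝ) * (((c:ℝ)+1) - (b:ℝ))) := by
    rw [hX]
    have h1 : Γ1 ≠ 0 := ne_of_gt hG1
    field_simp
    push_cast
    ring
  rw [e1, e2, hch]

/-- For `σ̃ ≥ 0` and `k, l ≥ 2`, `∑_{m=2}^{k} A_{k,m}(σ̃)·B_{m,l}(σ̃) = −l(σ̃+l−1)·B_{k,l}(σ̃)`:
the `l`-th column of `B(σ̃)` is an eigenvector of `A(σ̃)` with eigenvalue `−l(σ̃+l−1)`. -/
theorem Amat_mul_Bmat_col_eq_eigen (σ : ℝ) (hσ : 0 ≤ σ) (k l : ℕ) (hk : 2 ≤ k) (hl : 2 ≤ l) :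
    ∑ m ∈ Finset.Icc 2 k, Amat σ k m * Bmat σ m l
      = (-(l : ℝ) * (σ + (l : ℝ) - 1)) * Bmat σ k l := by
  obtain ⟨b, rfl⟩ : ∃ b, l = b + 1 := ⟨l - 1, by omega⟩
  have hb : 1 ≤ b := by omega
  rcases eq_or_lt_of_le hk with hk2 | hk3
  · -- k = 2
    subst hk2
    rw [show Finset.Icc 2 2 = {2} from rfl, Finset.sum_singleton]
    rcases eq_or_lt_of_le hb with hb1 | hb2
    · -- l = 2
      subst hb1
      simp only [Amat, if_neg (by omega : ¬ (2 = 2 + 1)), if_pos rfl]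
      push_cast; ring
    · -- l ≥ 3 : Bmat σ 2 (b+1) = 0
      have hB : Bmat σ 2 (b+1) = 0 := by
        have h0 : Nat.choose 1 b = 0 := Nat.choose_eq_zero_of_lt (by omega)
        simp [Bmat, h0]
      rw [hB]; ring
  · -- k ≥ 3
    obtain ⟨c, rfl⟩ : ∃ c, k = c + 2 := ⟨k - 2, by omega⟩
    have hc : 1 ≤ c := by omega
    have hsubset : ({c+1, c+2} : Finset ℕ) ⊆ Finset.Icc 2 (c+2) := by
      intro m hm
      simp only [Finset.mem_insert, Finset.mem_singleton] at hm
      simp only [Finset.mem_Icc]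
      omega
    have hzero : ∀ m ∈ Finset.Icc 2 (c+2), m ∉ ({c+1, c+2} : Finset ℕ) →
        Amat σ (c+2) m * Bmat σ m (b+1) = 0 := by
      intro m hm hm'
      simp only [Finset.mem_insert, Finset.mem_singleton, not_or] at hm'
      rw [Amat, if_neg (by omega), if_neg (by omega), zero_mul]
    rw [← Finset.sum_subset hsubset hzero, Finset.sum_pair (by omega : c+1 ≠ c+2)]
    have hA1 : Amat σ (c+2) (c+1) = ((c:ℝ)+2) * (((c:ℝ)+2) - 1) := by
      rw [Amat, if_pos rfl]; push_cast; ring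
    have hA2 : Amat σ (c+2) (c+2) = -((c:ℝ)+2) * (σ + ((c:ℝ)+2) - 1) := by
      rw [Amat, if_neg (by omega), if_pos rfl]; push_cast; ring
    rw [hA1, hA2]
    rcases lt_trichotomy b (c+1) with hbc | hbc | hbc
    · -- l < k : use key_step
      have hkey := key_step σ hσ c b hb (by omega)
      push_cast
      push_cast at hkey
      linear_combination hkey
    · -- l = k : Bmat σ (c+1) (b+1) = 0
      subst hbc
      have hB : Bmat σ (c+1) (c+1+1) = 0 := by
        have h0 : Nat.choose c (c+1) = 0 := Nat.choose_eq_zero_of_lt (by omega)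
        simp [Bmat, h0]
      rw [hB]
      push_cast; ring
    · -- l > k : both Bmats vanish
      have h1 : Nat.choose c b = 0 := Nat.choose_eq_zero_of_lt (by omega)
      have h2 : Nat.choose (c+1) b = 0 := Nat.choose_eq_zero_of_lt (by omega)
      have hB1 : Bmat σ (c+1) (b+1) = 0 := by simp [Bmat, h1]
      have hB2 : Bmat σ (c+2) (b+1) = 0 := by simp [Bmat, h2]
      rw [hB1, hB2]
      ring
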